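/- Let p ≥ 2 be an integer and α ∈ ℝ. Any critical point V ∈ R^p of F^p_{m,α} satisfies (m−1) F^p_m(V) = α |V|²; in particular F^p_m(V) has the same sign as α, and F^p_m(V) = 0 when α = 0. -/

import Mathlib

open scoped BigOperators
noncomputable section

/-- Internal (diffusion) part: sum of (X_{i+1} - X_i)^(1-m) over consecutive gaps. -/
def gapSum (m : ℝ) (p : ℕ) (X : EuclideanSpace ℝ (Fin p)) : ℝ :=
  ∑ i : Fin p, if h : (i : ℕ) + 1 < p then (X ⟨(i : ℕ) + 1, h⟩ - X i) ^ (1 - m) else 0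

/-- Interaction part: sum of |X_i - X_j|^(1-m) over ordered pairs i ≠ j. -/
def pairSum (m : ℝ) (p : ℕ) (X : EuclideanSpace ℝ (Fin p)) : ℝ :=
  ∑ i : Fin p, ∑ j : Fin p, if i ≠ j then |X i - X j| ^ (1 - m) else 0

/-- The discrete free energy F^p_m. -/
def FF (m χ : ℝ) (p : ℕ) (X : EuclideanSpace ℝ (Fin p)) : ℝ :=
  (m - 1)⁻¹ * gapSum m p X - (χ / (m - 1)) * pairSum m p X

/-- Membership in R^p: strictly increasing with zero mean. -/
def memR (p : ℕ) (X : EuclideanSpace ℝ (Fin p)) : Prop :=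
  (StrictMono fun i => X i) ∧ ∑ i, X i = 0

/-- The critical constant C_p, with 1/C_p the sup of the HLS ratio. -/
def Cp (m : ℝ) (p : ℕ) : ℝ :=
  (sSup {r : ℝ | ∃ X : EuclideanSpace ℝ (Fin p), memR p X ∧
    r = pairSum m p X / gapSum m p X})⁻¹

/-- The functional F^p_{m,α} with confining quadratic potential. -/
def FFa (m χ α : ℝ) (p : ℕ) (X : EuclideanSpace ℝ (Fin p)) : ℝ :=
  FF m χ p X + α / 2 * ‖X‖ ^ 2

/-- H^N_{m+1}(Y) = |∇F^N_m(Y)|² − ((m−1) F^N_m(Y))². -/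
def Hfun (m χ : ℝ) (N : ℕ) (Y : EuclideanSpace ℝ (Fin N)) : ℝ :=
  ‖gradient (FF m χ N) Y‖ ^ 2 - ((m - 1) * FF m χ N Y) ^ 2

/-- X : [0,T) → R^N is a solution of the gradient flow of F^N_m. -/
def isGFlow (m χ : ℝ) (N : ℕ) (T : ℝ) (X : ℝ → EuclideanSpace ℝ (Fin N)) : Prop :=
  ∀ t ∈ Set.Ico (0 : ℝ) T, memR N (X t) ∧
    HasDerivWithinAt X (-(gradient (FF m χ N) (X t))) (Set.Ico (0 : ℝ) T) t

/-- The gap Y_{i+1} - Y_i (0 if i+1 is out of range). -/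
def gapAt (N : ℕ) (Y : EuclideanSpace ℝ (Fin N)) (i : ℕ) : ℝ :=
  if h : i + 1 < N then Y ⟨i + 1, h⟩ - Y ⟨i, Nat.lt_of_succ_lt h⟩ else 0

lemma aux_proj_diff {p : ℕ} (j : Fin p) (V : EuclideanSpace ℝ (Fin p)) :
    DifferentiableAt ℝ (fun Y : EuclideanSpace ℝ (Fin p) => Y j) V :=
  (EuclideanSpace.proj (𝕜 := ℝ) j).differentiableAt.congr_of_eventuallyEq
    (Filter.Eventually.of_forall fun Y => rfl)

lemma aux_FFa_diff {m χ α : ℝ} {p : ℕ} {V : EuclideanSpace ℝ (Fin p)}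
    (hmono : StrictMono fun i => V i) : DifferentiableAt ℝ (FFa m χ α p) V := by
  have hgap : DifferentiableAt ℝ (gapSum m p) V := by
    unfold gapSum
    apply DifferentiableAt.fun_sum
    intro i _
    by_cases h : (i : ℕ) + 1 < p
    · simp only [dif_pos h]
      refine ((aux_proj_diff _ V).sub (aux_proj_diff _ V)).rpow_const (Or.inl ?_)
      have : V i < V ⟨(i : ℕ) + 1, h⟩ := hmono (by simp [Fin.lt_def])
      exact ne_of_gt (sub_pos.2 this)
    · simp only [dif_neg h]
      exact differentiableAt_const 0
  have hpair : DifferentiableAt ℝ (pairSum m p) V := by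
    unfold pairSum
    apply DifferentiableAt.fun_sum
    intro i _
    apply DifferentiableAt.fun_sum
    intro j _
    by_cases h : i = j
    · simp only [if_neg (fun hh : i ≠ j => hh h)]
      exact differentiableAt_const 0
    · simp only [if_pos h]
      refine (((aux_proj_diff _ V).sub (aux_proj_diff _ V)).abs ?_).rpow_const (Or.inl ?_)
      · exact sub_ne_zero.2 (fun e => h (hmono.injective e))
      · exact abs_ne_zero.2 (sub_ne_zero.2 (fun e => h (hmono.injective e)))
  have hnorm : DifferentiableAt ℝ (fun X : EuclideanSpace ℝ (Fin p) => ‖X‖ ^ 2) V :=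
    ((contDiff_norm_sq ℝ (n := 1)).differentiable one_ne_zero).differentiableAt
  unfold FFa FF
  exact ((hgap.const_mul _).sub (hpair.const_mul _)).add (hnorm.const_mul _)

lemma aux_gapSum_smul {m : ℝ} {p : ℕ} {V : EuclideanSpace ℝ (Fin p)} {c : ℝ} (hc : 0 < c)
    (hmono : StrictMono fun i => V i) :
    gapSum m p (c • V) = c ^ (1 - m) * gapSum m p V := by
  unfold gapSum
  rw [Finset.mul_sum]
  refine Finset.sum_congr rfl fun i _ => ?_
  by_cases h : (i : ℕ) + 1 < p
  · simp only [dif_pos h, PiLp.smul_apply, smul_eq_mul]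
    rw [← mul_sub, Real.mul_rpow hc.le]
    have : V i < V ⟨(i : ℕ) + 1, h⟩ := hmono (by simp [Fin.lt_def])
    exact sub_nonneg.2 this.le
  · simp [dif_neg h]

lemma aux_pairSum_smul {m : ℝ} {p : ℕ} {V : EuclideanSpace ℝ (Fin p)} {c : ℝ} (hc : 0 < c) :
    pairSum m p (c • V) = c ^ (1 - m) * pairSum m p V := by
  unfold pairSum
  rw [Finset.mul_sum]
  refine Finset.sum_congr rfl fun i _ => ?_
  rw [Finset.mul_sum]
  refine Finset.sum_congr rfl fun j _ => ?_
  by_cases h : i = j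
  · simp [h]
  · simp only [if_pos h, PiLp.smul_apply, smul_eq_mul]
    rw [← mul_sub, abs_mul, abs_of_pos hc, Real.mul_rpow hc.le (abs_nonneg _)]

lemma aux_FF_smul {m χ : ℝ} {p : ℕ} {V : EuclideanSpace ℝ (Fin p)} {c : ℝ} (hc : 0 < c)
    (hmono : StrictMono fun i => V i) :
    FF m χ p (c • V) = c ^ (1 - m) * FF m χ p V := by
  unfold FF
  rw [aux_gapSum_smul hc hmono, aux_pairSum_smul hc]
  ring


theorem stmt6 (m χ : ℝ) (hm : 1 < m) (hχ : 0 < χ) (p : ℕ) (hp : 2 ≤ p) (α : ℝ)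
    (V : EuclideanSpace ℝ (Fin p)) (hV : memR p V)
    (hcrit : gradient (FFa m χ α p) V = 0) :
    (m - 1) * FF m χ p V = α * ‖V‖ ^ 2 ∧
    (0 < α → 0 < FF m χ p V) ∧ (α < 0 → FF m χ p V < 0) ∧ (α = 0 → FF m χ p V = 0) := by
  obtain ⟨hmono, hsum⟩ := hV
  have hdiff : DifferentiableAt ℝ (FFa m χ α p) V := aux_FFa_diff hmono
  have hfd : fderiv ℝ (FFa m χ α p) V = 0 := by
    unfold gradient at hcrit
    exact (LinearIsometryEquiv.map_eq_zero_iff _).1 hcrit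
  have hF : HasFDerivAt (FFa m χ α p) (0 : EuclideanSpace ℝ (Fin p) →L[ℝ] ℝ) V := hfd ▸ hdiff.hasFDerivAt
  have h1 : HasDerivAt (fun t : ℝ => 1 + t) 1 0 := (hasDerivAt_id 0).const_add 1
  have he : HasDerivAt (fun t : ℝ => t • V) V 0 := by
    simpa using (hasDerivAt_id (0:ℝ)).smul_const V
  have hcurve : HasDerivAt (fun t : ℝ => (1 + t) • V) V 0 := by
    have heq : (fun t : ℝ => (1 + t) • V) = fun t => V + t • V := by
      funext t; rw [add_smul, one_smul]
    rw [heq]; exact he.const_add V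
  have hF' : HasFDerivAt (FFa m χ α p) (0 : EuclideanSpace ℝ (Fin p) →L[ℝ] ℝ) ((1 + 0 : ℝ) • V) := by
    rw [show ((1 + 0 : ℝ) • V) = V by simp]; exact hF
  have hcomp : HasDerivAt (fun t : ℝ => FFa m χ α p ((1 + t) • V)) 0 0 := by
    simpa [Function.comp_def] using hF'.comp_hasDerivAt 0 hcurve
  have hA : HasDerivAt (fun t : ℝ => (1 + t) ^ (1 - m)) (1 - m) 0 := by
    have h2 := (Real.hasDerivAt_rpow_const (x := (1:ℝ) + 0) (p := 1 - m)
      (Or.inl (by norm_num))).comp 0 h1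
    simpa [Function.comp_def] using h2
  have hB : HasDerivAt (fun t : ℝ => ((1 + t) ^ 2 : ℝ)) 2 0 := by
    simpa [Pi.pow_def] using h1.pow 2
  have hg : HasDerivAt
      (fun t : ℝ => (1 + t) ^ (1 - m) * FF m χ p V + α / 2 * ((1 + t) ^ 2 * ‖V‖ ^ 2))
      ((1 - m) * FF m χ p V + α / 2 * (2 * ‖V‖ ^ 2)) 0 :=
    (hA.mul_const _).add (((hB.mul_const _).const_mul _))
  have hev : (fun t : ℝ => FFa m χ α p ((1 + t) • V)) =ᶠ[nhds 0]
      (fun t : ℝ => (1 + t) ^ (1 - m) * FF m χ p V + α / 2 * ((1 + t) ^ 2 * ‖V‖ ^ 2)) := by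
    filter_upwards [Ioi_mem_nhds (show (-1:ℝ) < 0 by norm_num)] with t ht
    have hc : (0:ℝ) < 1 + t := by
      have := Set.mem_Ioi.1 ht; linarith
    unfold FFa
    rw [aux_FF_smul hc hmono, norm_smul]
    simp only [Real.norm_eq_abs, abs_of_pos hc]
    ring
  have hg0 : HasDerivAt
      (fun t : ℝ => (1 + t) ^ (1 - m) * FF m χ p V + α / 2 * ((1 + t) ^ 2 * ‖V‖ ^ 2)) 0 0 :=
    hcomp.congr_of_eventuallyEq hev.symm
  have keyeq := hg.unique hg0
  have key : (m - 1) * FF m χ p V = α * ‖V‖ ^ 2 := by linear_combination -keyeq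
  have hVne : V ≠ 0 := by
    intro h0
    have h01 : V ⟨0, by omega⟩ < V ⟨1, by omega⟩ := hmono (by simp [Fin.lt_def])
    rw [h0] at h01
    simp at h01
  have hnormpos : 0 < ‖V‖ ^ 2 := pow_pos (norm_pos_iff.2 hVne) 2
  refine ⟨key, ?_, ?_, ?_⟩
  · intro ha
    nlinarith [mul_pos ha hnormpos]
  · intro ha
    nlinarith [mul_pos (neg_pos.2 ha) hnormpos]
  · intro ha
    have : (m - 1) * FF m χ p V = 0 := by rw [key, ha]; ring
    rcases mul_eq_zero.1 this with h | h
    · linarith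
    · exact h
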